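/- Let θ > 0, γ > 0, and g(x,o) = o·((R₁-T₁)x + (S₁-P₁)(1-x)) + (1-o)·((R₀-T₀)x + (S₀-P₀)(1-x)). If (x,n,o) : [0,∞) → ℝ³ is differentiable and solves the opinion-coupled system ẋ = x(1-x)g(x,o), ṅ = n(1-n)(θx − (1−x)), ȯ = −γ(o−n), with (x(0), n(0), o(0)) ∈ [0,1]³, then (x(t), n(t), o(t)) ∈ [0,1]³ for all t ≥ 0; that is, the unit cube [0,1]³ is forward invariant. -/

import Mathlib

open Set Real

/-- If `y' = y * h` for `t ≥ 0` with `h` continuous on `[0,∞)` and `y 0 ≥ 0`,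
then `y` stays nonnegative on `[0,∞)`. -/
lemma sign_preserve {y h : ℝ → ℝ}
    (hy : ∀ t ≥ (0:ℝ), HasDerivAt y (y t * h t) t)
    (hh : ContinuousOn h (Set.Ici (0:ℝ)))
    (h0 : 0 ≤ y 0) : ∀ t ≥ (0:ℝ), 0 ≤ y t := by
  intro T hT
  by_contra hneg
  push_neg at hneg
  have hyc : ContinuousOn y (Set.Ici 0) :=
    fun t ht => ((hy t ht).continuousAt).continuousWithinAt
  set S := {t : ℝ | t ∈ Set.Icc (0:ℝ) T ∧ 0 ≤ y t} with hSdef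
  have hS0 : (0:ℝ) ∈ S := ⟨⟨le_refl _, hT⟩, h0⟩
  have hSne : S.Nonempty := ⟨0, hS0⟩
  have hScl : IsClosed S := by
    have : S = Set.Icc (0:ℝ) T ∩ y ⁻¹' Set.Ici 0 := by
      ext t; simp [hSdef, Set.mem_Icc, and_assoc]
    rw [this]
    exact (hyc.mono (Set.Icc_subset_Ici_self)).preimage_isClosed_of_isClosed
      isClosed_Icc isClosed_Ici
  have hScpt : IsCompact S := isCompact_Icc.of_isClosed_subset hScl (fun t ht => ht.1)
  set t1 := sSup S with ht1def
  have ht1S : t1 ∈ S := hScpt.sSup_mem hSne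
  have ht1T : t1 ≤ T := ht1S.1.2
  have ht10 : 0 ≤ t1 := ht1S.1.1
  have ht1ltT : t1 < T := lt_of_le_of_ne ht1T (by
    intro h; rw [h] at ht1S; exact absurd ht1S.2 (not_le.mpr hneg))
  have hBdd : BddAbove S := hScpt.bddAbove
  -- on (t1, T], y < 0
  have hlt : ∀ t ∈ Set.Ioc t1 T, y t < 0 := by
    intro t ht
    by_contra hge
    push_neg at hge
    have : t ∈ S := ⟨⟨le_trans ht10 ht.1.le, ht.2⟩, hge⟩
    exact absurd (le_csSup hBdd this) (not_le.mpr ht.1)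
  -- y t1 = 0
  have hy0 : y t1 = 0 := by
    refine le_antisymm ?_ ht1S.2
    have htend : Filter.Tendsto y (nhdsWithin t1 (Set.Ioi t1)) (nhds (y t1)) :=
      ((hy t1 ht10).continuousAt.tendsto).mono_left nhdsWithin_le_nhds
    have hev : ∀ᶠ t in nhdsWithin t1 (Set.Ioi t1), y t ≤ 0 := by
      filter_upwards [Ioc_mem_nhdsGT ht1ltT] with t ht
      exact (hlt t ht).le
    exact le_of_tendsto htend hev
  -- bound for h on [t1, T]
  obtain ⟨C, hC⟩ := (isCompact_Icc (a := t1) (b := T)).exists_bound_of_continuousOn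
    (hh.mono (fun t ht => le_trans ht10 ht.1))
  -- Gronwall
  have hg : ∀ t ∈ Set.Icc t1 T, ‖y t‖ ≤ gronwallBound 0 C 0 (t - t1) := by
    refine norm_le_gronwallBound_of_norm_deriv_right_le
      (f' := fun t => y t * h t)
      (hyc.mono (fun t ht => le_trans ht10 ht.1)) ?_ (by simp [hy0]) ?_
    · intro t ht
      exact ((hy t (le_trans ht10 ht.1)).hasDerivWithinAt)
    · intro t ht
      have := hC t ⟨ht.1, ht.2.le⟩
      rw [Real.norm_eq_abs, Real.norm_eq_abs, abs_mul, add_zero, mul_comm]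
      exact mul_le_mul_of_nonneg_right (by simpa [Real.norm_eq_abs] using this)
        (abs_nonneg _)
  have := hg T ⟨ht1T, le_refl T⟩
  rw [gronwallBound_ε0_δ0] at this
  have : y T = 0 := norm_le_zero_iff.mp this
  linarith

/-- The unit cube [0,1]³ is forward invariant under the opinion-coupled
feedback-evolving game dynamics ẋ = x(1−x)g(x,o), ṅ = n(1−n)(θx − (1−x)),
ȯ = −γ(o−n). -/
theorem unit_cube_forward_invariant_opinion
    (θ γ R₀ S₀ T₀ P₀ R₁ S₁ T₁ P₁ : ℝ) (hθ : 0 < θ) (hγ : 0 < γ)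
    (g : ℝ → ℝ → ℝ)
    (hg : ∀ a c : ℝ, g a c
      = c * ((R₁ - T₁) * a + (S₁ - P₁) * (1 - a))
        + (1 - c) * ((R₀ - T₀) * a + (S₀ - P₀) * (1 - a)))
    (x n o : ℝ → ℝ)
    (hx : ∀ t ≥ (0 : ℝ), HasDerivAt x (x t * (1 - x t) * g (x t) (o t)) t)
    (hn : ∀ t ≥ (0 : ℝ),
      HasDerivAt n (n t * (1 - n t) * (θ * x t - (1 - x t))) t)
    (ho : ∀ t ≥ (0 : ℝ), HasDerivAt o (-(γ * (o t - n t))) t)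
    (hx0 : x 0 ∈ Set.Icc (0 : ℝ) 1) (hn0 : n 0 ∈ Set.Icc (0 : ℝ) 1)
    (ho0 : o 0 ∈ Set.Icc (0 : ℝ) 1) :
    ∀ t ≥ (0 : ℝ),
      x t ∈ Set.Icc (0 : ℝ) 1 ∧ n t ∈ Set.Icc (0 : ℝ) 1 ∧
      o t ∈ Set.Icc (0 : ℝ) 1 := by
  have hxc : ContinuousOn x (Set.Ici 0) :=
    fun t ht => ((hx t ht).continuousAt).continuousWithinAt
  have hnc : ContinuousOn n (Set.Ici 0) :=
    fun t ht => ((hn t ht).continuousAt).continuousWithinAt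
  have hoc : ContinuousOn o (Set.Ici 0) :=
    fun t ht => ((ho t ht).continuousAt).continuousWithinAt
  -- continuity of t ↦ g (x t) (o t)
  have hGeq : (fun t => g (x t) (o t)) = fun t =>
      o t * ((R₁ - T₁) * x t + (S₁ - P₁) * (1 - x t))
        + (1 - o t) * ((R₀ - T₀) * x t + (S₀ - P₀) * (1 - x t)) :=
    funext fun t => hg (x t) (o t)
  have hGc : ContinuousOn (fun t => g (x t) (o t)) (Set.Ici 0) := by
    rw [hGeq]; fun_prop
  -- x lower bound
  have hxlow : ∀ t ≥ (0:ℝ), 0 ≤ x t := by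
    refine sign_preserve (h := fun t => (1 - x t) * g (x t) (o t)) ?_ ((continuousOn_const.sub hxc).mul hGc) hx0.1
    intro t ht
    have := hx t ht
    convert this using 1; ring
  -- x upper bound
  have hxup : ∀ t ≥ (0:ℝ), x t ≤ 1 := by
    have := sign_preserve (y := fun t => 1 - x t)
      (h := fun t => -(x t * g (x t) (o t))) ?_ ((hxc.mul hGc).neg)
      (by simpa using hx0.2)
    · intro t ht
      have h2 : (0:ℝ) ≤ 1 - x t := this t ht
      linarith
    · intro t ht
      have h1 := (hx t ht).const_sub 1
      exact h1.congr_deriv (by ring)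
  -- n lower bound
  have hnlow : ∀ t ≥ (0:ℝ), 0 ≤ n t := by
    refine sign_preserve (h := fun t => (1 - n t) * (θ * x t - (1 - x t))) ?_ (by fun_prop) hn0.1
    intro t ht
    convert hn t ht using 1; ring
  -- n upper bound
  have hnup : ∀ t ≥ (0:ℝ), n t ≤ 1 := by
    have := sign_preserve (y := fun t => 1 - n t)
      (h := fun t => -(n t * (θ * x t - (1 - x t)))) ?_ (by fun_prop)
      (by simpa using hn0.2)
    · intro t ht
      have h2 : (0:ℝ) ≤ 1 - n t := this t ht
      linarith
    · intro t ht
      have h1 := (hn t ht).const_sub 1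
      exact h1.congr_deriv (by ring)
  -- o bounds via monotonicity of auxiliary functions
  have hexp : ∀ t : ℝ, HasDerivAt (fun s => Real.exp (γ * s)) (Real.exp (γ * t) * γ) t := by
    intro t
    have h1 : HasDerivAt (fun s : ℝ => γ * s) γ t := by
      simpa using (hasDerivAt_id t).const_mul γ
    exact h1.exp
  have holow : ∀ t ≥ (0:ℝ), 0 ≤ o t := by
    intro T hT
    set w : ℝ → ℝ := fun t => o t * Real.exp (γ * t) with hwdef
    have hwd : ∀ t ≥ (0:ℝ), HasDerivAt w (γ * n t * Real.exp (γ * t)) t := by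
      intro t ht
      have := (ho t ht).mul (hexp t)
      exact this.congr_deriv (by ring)
    have hmono : MonotoneOn w (Set.Icc 0 T) := by
      apply monotoneOn_of_deriv_nonneg (convex_Icc 0 T)
      · exact (hoc.mono Set.Icc_subset_Ici_self).mul (by fun_prop)
      · intro t ht
        rw [interior_Icc] at ht
        exact ((hwd t ht.1.le).differentiableAt).differentiableWithinAt
      · intro t ht
        rw [interior_Icc] at ht
        rw [(hwd t ht.1.le).deriv]
        have := hnlow t ht.1.le
        positivity
    have h01 : w 0 ≤ w T := hmono ⟨le_refl 0, hT⟩ ⟨hT, le_refl T⟩ hT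
    have hw0 : 0 ≤ w 0 := mul_nonneg ho0.1 (Real.exp_pos _).le
    have : 0 ≤ o T * Real.exp (γ * T) := le_trans hw0 h01
    nlinarith [Real.exp_pos (γ * T)]
  have houp : ∀ t ≥ (0:ℝ), o t ≤ 1 := by
    intro T hT
    set u : ℝ → ℝ := fun t => (1 - o t) * Real.exp (γ * t) with hudef
    have hud : ∀ t ≥ (0:ℝ), HasDerivAt u (γ * (1 - n t) * Real.exp (γ * t)) t := by
      intro t ht
      have := ((ho t ht).const_sub 1).mul (hexp t)
      exact this.congr_deriv (by ring)
    have hmono : MonotoneOn u (Set.Icc 0 T) := by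
      apply monotoneOn_of_deriv_nonneg (convex_Icc 0 T)
      · exact ((continuousOn_const.sub (hoc.mono Set.Icc_subset_Ici_self))).mul (by fun_prop)
      · intro t ht
        rw [interior_Icc] at ht
        exact ((hud t ht.1.le).differentiableAt).differentiableWithinAt
      · intro t ht
        rw [interior_Icc] at ht
        rw [(hud t ht.1.le).deriv]
        have := hnup t ht.1.le
        have h1 : (0:ℝ) ≤ 1 - n t := by linarith
        positivity
    have h01 : u 0 ≤ u T := hmono ⟨le_refl 0, hT⟩ ⟨hT, le_refl T⟩ hT
    have hu0 : 0 ≤ u 0 := mul_nonneg (by linarith [ho0.2]) (Real.exp_pos _).le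
    have : 0 ≤ (1 - o T) * Real.exp (γ * T) := le_trans hu0 h01
    nlinarith [Real.exp_pos (γ * T)]
  intro t ht
  exact ⟨⟨hxlow t ht, hxup t ht⟩, ⟨hnlow t ht, hnup t ht⟩, ⟨holow t ht, houp t ht⟩⟩
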